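/- arXiv:1310.3526 — 2 statements merged into one kernel-verified Lean document; each statement's English description precedes it below -/
import Mathlib

section
/- Let ε' ∈ (0,1) and suppose p(n) = C·n^{-2/3} for some constant C > 0. Then asymptotically almost surely every subgraph G' of the random bipartite graph G(n,n,p(n)) with minimum degree at least ε'·n·p(n) satisfies the following expansion property: for every vertex set X ⊆ V₀ ∪ V₁ with |X| ≤ ε'·n/15, one has |N_{G'}(X) \ X| ≥ 2|X|. -/
open MeasureTheory

/-- The Bernoulli measure on `Bool` with success probability `p`. -/
noncomputable def bernoulliMeasure (p : ℝ) : Measure Bool :=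
  (PMF.bernoulli (min (Real.toNNReal p) 1) (min_le_right _ _)).toMeasure

/-- The distribution of `G(n, n, p)`: each of the `n²` potential edges (indexed by
`Fin n × Fin n`) is present independently with probability `p`. -/
noncomputable def bipartiteMeasure (n : ℕ) (p : ℝ) : Measure (Fin n × Fin n → Bool) :=
  Measure.pi fun _ => bernoulliMeasure p

/-- The bipartite graph on `Fin n ⊕ Fin n` determined by the edge indicators `ω`. -/
def bipartiteGraph (n : ℕ) (ω : Fin n × Fin n → Bool) : SimpleGraph (Fin n ⊕ Fin n) where
  Adj x y := match x, y with
    | Sum.inl i, Sum.inr j => ω (i, j) = true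
    | Sum.inr j, Sum.inl i => ω (i, j) = true
    | _, _ => False
  symm := ⟨by rintro (i|i) (j|j) h <;> simp_all⟩
  loopless := ⟨by rintro (i|i) h <;> simp_all⟩


/-- `N_G(X)`: the set of vertices adjacent in `G` to at least one vertex of `X`. -/
def setNeighborSet {V : Type*} (G : SimpleGraph V) (X : Set V) : Set V :=
  {u | ∃ v ∈ X, G.Adj v u}

lemma allMeas {n : ℕ} (s : Set (Fin n × Fin n → Bool)) : MeasurableSet s :=
  Set.Finite.measurableSet (Set.toFinite s)

instance bernoulliProb (p : ℝ) : IsProbabilityMeasure (bernoulliMeasure p) :=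
  PMF.toMeasure.isProbabilityMeasure _

instance bipartiteProb (n : ℕ) (p : ℝ) : IsProbabilityMeasure (bipartiteMeasure n p) := by
  unfold bipartiteMeasure; infer_instance

lemma cyl_measure {n : ℕ} {p : ℝ} (hp0 : 0 ≤ p) (hp1 : p ≤ 1)
    (F : Finset (Fin n × Fin n)) :
    bipartiteMeasure n p {ω | ∀ e ∈ F, ω e = true} = ENNReal.ofReal p ^ F.card := by
  have hmin : min (ENNReal.ofReal p) 1 = ENNReal.ofReal p :=
    min_eq_left (ENNReal.ofReal_le_one.2 hp1)
  have hb : bernoulliMeasure p {true} = ENNReal.ofReal p := by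
    rw [bernoulliMeasure, PMF.toMeasure_apply_singleton _ _ (measurableSet_singleton _),
      PMF.bernoulli_apply]
    simp [min_eq_left (Real.toNNReal_le_one.2 hp1), ENNReal.ofReal]
  have hs : {ω : Fin n × Fin n → Bool | ∀ e ∈ F, ω e = true}
      = Set.univ.pi (fun e => if e ∈ F then ({true} : Set Bool) else Set.univ) := by
    ext ω
    simp only [Set.mem_setOf_eq, Set.mem_pi, Set.mem_univ, forall_true_left]
    constructor
    · intro h e; split_ifs with he
      · simp [h e he]
      · trivial
    · intro h e he; have := h e; rw [if_pos he] at this; simpa using this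
  rw [hs, bipartiteMeasure, Measure.pi_pi]
  have : ∀ e : Fin n × Fin n,
      bernoulliMeasure p (if e ∈ F then ({true} : Set Bool) else Set.univ)
      = if e ∈ F then ENNReal.ofReal p else 1 := by
    intro e; split_ifs
    · exact hb
    · exact measure_univ
  rw [Finset.prod_congr rfl (fun e _ => this e)]
  rw [Finset.prod_ite_mem Finset.univ F (fun _ => ENNReal.ofReal p), Finset.univ_inter,
    Finset.prod_const]

lemma pow_self_le (t : ℕ) : (t : ℝ) ^ t ≤ 3 ^ t * t.factorial := by
  induction t with
  | zero => norm_num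
  | succ t ih =>
    have key : ((t:ℝ) + 1) ^ t ≤ 3 * (t:ℝ) ^ t := by
      rcases Nat.eq_zero_or_pos t with h0 | hpos
      · subst h0; norm_num
      · have ht : (0:ℝ) < t := by exact_mod_cast hpos
        have h1 : (t:ℝ) + 1 = (t:ℝ) * (1 + 1/t) := by field_simp
        have h2 : (1 + 1/(t:ℝ)) ≤ Real.exp (1/t) := by
          have := Real.add_one_le_exp (1/(t:ℝ)); linarith
        have h3 : ((t:ℝ) + 1)^t ≤ ((t:ℝ) * Real.exp (1/t))^t := by
          apply pow_le_pow_left₀ (by positivity)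
          rw [h1]
          exact mul_le_mul_of_nonneg_left h2 ht.le
        have h4 : ((t:ℝ) * Real.exp (1/t))^t = (t:ℝ)^t * Real.exp 1 := by
          rw [mul_pow, ← Real.exp_nat_mul]
          congr 1
          field_simp
        have h5 : Real.exp 1 ≤ 3 := by
          have := Real.exp_one_lt_d9; linarith
        calc ((t:ℝ) + 1)^t ≤ (t:ℝ)^t * Real.exp 1 := by rw [← h4]; exact h3
          _ ≤ (t:ℝ)^t * 3 := by
              apply mul_le_mul_of_nonneg_left h5 (by positivity)
          _ = 3 * (t:ℝ)^t := by ring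
    have ih' : (t:ℝ)^t ≤ 3^t * t.factorial := ih
    push_cast
    calc ((t:ℝ)+1)^(t+1) = ((t:ℝ)+1) * ((t:ℝ)+1)^t := by ring
      _ ≤ ((t:ℝ)+1) * (3 * (t:ℝ)^t) := by
          apply mul_le_mul_of_nonneg_left key (by positivity)
      _ ≤ ((t:ℝ)+1) * (3 * (3^t * t.factorial)) := by
          apply mul_le_mul_of_nonneg_left _ (by positivity)
          exact mul_le_mul_of_nonneg_left ih' (by norm_num)
      _ = 3^(t+1) * ((t+1) * t.factorial) := by push_cast; ring
      _ = 3^(t+1) * ((t+1).factorial) := by rw [Nat.factorial_succ]; push_cast; ring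

open Classical in
noncomputable def slots (n : ℕ) (S : Finset (Fin n ⊕ Fin n)) : Finset (Fin n × Fin n) :=
  Finset.univ.filter (fun e => Sum.inl e.1 ∈ S ∧ Sum.inr e.2 ∈ S)

open Classical in
noncomputable def present (n : ℕ) (ω : Fin n × Fin n → Bool)
    (S : Finset (Fin n ⊕ Fin n)) : Finset (Fin n × Fin n) :=
  (slots n S).filter (fun e => ω e = true)

def Good (n : ℕ) (ε' d : ℝ) (ω : Fin n × Fin n → Bool) : Prop :=
  ∀ S : Finset (Fin n ⊕ Fin n), 1 ≤ S.card → (S.card : ℝ) ≤ ε' * n / 5 →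
    ((present n ω S).card : ℝ) < S.card * d / 6

-- the injection used for double counting
def slotKey {n : ℕ} : (_ : Fin n ⊕ Fin n) × (Fin n ⊕ Fin n) → (Fin n × Fin n) × Bool
  | ⟨Sum.inl i, Sum.inr j⟩ => ((i, j), true)
  | ⟨Sum.inr j, Sum.inl i⟩ => ((i, j), false)
  | ⟨Sum.inl i, Sum.inl i'⟩ => ((i, i'), true)
  | ⟨Sum.inr j, Sum.inr j'⟩ => ((j, j'), false)

lemma det {n : ℕ} {ε' d : ℝ} (hε : 0 < ε') {ω : Fin n × Fin n → Bool}
    (hG : Good n ε' d ω) :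
    ∀ G' : SimpleGraph (Fin n ⊕ Fin n), G' ≤ bipartiteGraph n ω →
      (∀ v : Fin n ⊕ Fin n, d ≤ ((G'.neighborSet v).ncard : ℝ)) →
      ∀ X : Set (Fin n ⊕ Fin n), (X.ncard : ℝ) ≤ ε' * n / 15 →
        2 * X.ncard ≤ ((setNeighborSet G' X) \ X).ncard := by
  classical
  intro G' hle hdeg X hX
  by_contra hcon
  push_neg at hcon
  set XF : Finset (Fin n ⊕ Fin n) := Finset.univ.filter (· ∈ X) with hXF
  set YF : Finset (Fin n ⊕ Fin n) :=
    Finset.univ.filter (· ∈ (setNeighborSet G' X) \ X) with hYF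
  have hXcard : X.ncard = XF.card := by
    rw [← Set.ncard_coe_finset XF]; congr 1; ext v; simp [hXF]
  have hYcard : ((setNeighborSet G' X) \ X).ncard = YF.card := by
    rw [← Set.ncard_coe_finset YF]; congr 1; ext v; simp [hYF]
  rw [hXcard, hYcard] at hcon
  -- X is nonempty
  have hx1 : 1 ≤ XF.card := by omega
  have hSF : (XF ∪ YF).card ≤ 3 * XF.card := by
    have := Finset.card_union_le XF YF
    omega
  set SF := XF ∪ YF with hSFdef
  have hScard : SF.card ≤ 3 * XF.card := hSF
  -- neighbor finsets
  set nbrs : (Fin n ⊕ Fin n) → Finset (Fin n ⊕ Fin n) :=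
    fun v => Finset.univ.filter (fun u => G'.Adj v u) with hnbrs
  have hnbrscard : ∀ v, (G'.neighborSet v).ncard = (nbrs v).card := by
    intro v
    rw [← Set.ncard_coe_finset (nbrs v)]
    congr 1; ext u; simp [hnbrs, SimpleGraph.neighborSet]
  -- step 2 : double counting
  have hstep2 : ∑ v ∈ XF, (nbrs v).card ≤ 2 * (present n ω SF).card := by
    rw [← Finset.card_sigma]
    have := Finset.card_le_card_of_injOn (s := XF.sigma nbrs)
      (t := (present n ω SF) ×ˢ (Finset.univ : Finset Bool)) slotKey ?_ ?_
    · rw [Finset.card_product] at this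
      simpa [Finset.card_univ, mul_comm] using this
    · rintro ⟨v, u⟩ hvu
      rw [Finset.mem_coe, Finset.mem_sigma] at hvu; rw [Finset.mem_coe]
      obtain ⟨hv, hu⟩ := hvu
      have hvX : v ∈ X := by simpa [hXF] using hv
      have hadj : G'.Adj v u := by simpa [hnbrs] using hu
      have hadjG : (bipartiteGraph n ω).Adj v u := hle hadj
      have huN : u ∈ setNeighborSet G' X := ⟨v, hvX, hadj⟩
      have hvS : v ∈ SF := Finset.mem_union_left _ hv
      have huS : u ∈ SF := by
        by_cases huX : u ∈ X
        · exact Finset.mem_union_left _ (by simp [hXF, huX])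
        · exact Finset.mem_union_right _ (by simp [hYF, huN, huX])
      match v, u, hadjG with
      | Sum.inl i, Sum.inr j, hadjG =>
        simp only [slotKey, Finset.mem_product, Finset.mem_univ, and_true]
        have : ω (i, j) = true := hadjG
        simp [present, slots, this, hvS, huS]
      | Sum.inr j, Sum.inl i, hadjG =>
        simp only [slotKey, Finset.mem_product, Finset.mem_univ, and_true]
        have : ω (i, j) = true := hadjG
        simp [present, slots, this, hvS, huS]
    · rintro ⟨v, u⟩ hvu ⟨v', u'⟩ hvu' heq
      simp only [Finset.coe_sigma, Set.mem_sigma_iff, Finset.mem_coe] at hvu hvu'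
      have hadj : G'.Adj v u := by simpa [hnbrs] using hvu.2
      have hadj' : G'.Adj v' u' := by simpa [hnbrs] using hvu'.2
      have hG1 := hle hadj
      have hG2 := hle hadj'
      match v, u, hG1, v', u', hG2 with
      | Sum.inl i, Sum.inr j, _, Sum.inl i', Sum.inr j', _ =>
        simp only [slotKey, Prod.mk.injEq] at heq
        obtain ⟨⟨h1, h2⟩, _⟩ := heq
        subst h1; subst h2; rfl
      | Sum.inl i, Sum.inr j, _, Sum.inr j', Sum.inl i', _ =>
        simp only [slotKey, Prod.mk.injEq] at heq
        exact absurd heq.2 (by simp)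
      | Sum.inr j, Sum.inl i, _, Sum.inl i', Sum.inr j', _ =>
        simp only [slotKey, Prod.mk.injEq] at heq
        exact absurd heq.2 (by simp)
      | Sum.inr j, Sum.inl i, _, Sum.inr j', Sum.inl i', _ =>
        simp only [slotKey, Prod.mk.injEq] at heq
        obtain ⟨⟨h1, h2⟩, _⟩ := heq
        subst h1; subst h2; rfl
  -- step 1
  have hstep1 : (XF.card : ℝ) * d ≤ ∑ v ∈ XF, ((nbrs v).card : ℝ) := by
    calc (XF.card : ℝ) * d = ∑ _v ∈ XF, d := by rw [Finset.sum_const, nsmul_eq_mul]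
      _ ≤ ∑ v ∈ XF, ((nbrs v).card : ℝ) := by
          apply Finset.sum_le_sum
          intro v _
          rw [← hnbrscard v]
          exact hdeg v
  -- apply Good
  have hS1 : 1 ≤ SF.card := le_trans hx1 (Finset.card_le_card (Finset.subset_union_left))
  have hS5 : (SF.card : ℝ) ≤ ε' * n / 5 := by
    have h3 : (SF.card : ℝ) ≤ 3 * XF.card := by exact_mod_cast hScard
    have : (XF.card : ℝ) ≤ ε' * n / 15 := by rw [hXcard] at hX; exact_mod_cast hX
    linarith
  have hgood := hG SF hS1 hS5
  have hsum : (∑ v ∈ XF, ((nbrs v).card : ℝ)) ≤ 2 * ((present n ω SF).card : ℝ) := by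
    exact_mod_cast hstep2
  have hScard' : (SF.card : ℝ) ≤ 3 * XF.card := by exact_mod_cast hScard
  have hS1' : (1:ℝ) ≤ SF.card := by exact_mod_cast hS1
  have hpres0 : (0:ℝ) ≤ ((present n ω SF).card : ℝ) := by positivity
  have hd_pos : 0 < d := by nlinarith
  have hmul : (SF.card : ℝ) * d ≤ 3 * XF.card * d :=
    mul_le_mul_of_nonneg_right hScard' hd_pos.le
  linarith

lemma choose_mul_pow_le {m t : ℕ} {p r : ℝ} (hp0 : 0 ≤ p) (ht : 1 ≤ t)
    (hr0 : 0 ≤ r) (h : 3 * m * p ≤ r * t) :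
    (m.choose t : ℝ) * p ^ t ≤ r ^ t := by
  have htpos : (0:ℝ) < t := by exact_mod_cast ht
  have hfac : (0:ℝ) < t.factorial := by exact_mod_cast t.factorial_pos
  have hchoose : (m.choose t : ℝ) * t.factorial ≤ (m:ℝ)^t := by
    have h2 : m.choose t * t.factorial ≤ m ^ t := by
      calc m.choose t * t.factorial = t.factorial * m.choose t := by ring
        _ = m.descFactorial t := (Nat.descFactorial_eq_factorial_mul_choose m t).symm
        _ ≤ m ^ t := Nat.descFactorial_le_pow m t
    exact_mod_cast h2
  have hdiv : 3 * (m:ℝ) * p / t ≤ r := by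
    rw [div_le_iff₀ htpos]
    linarith
  have h2 : (t:ℝ)^t * ((m.choose t:ℝ) * p^t) ≤ 3^t * (m:ℝ)^t * p^t := by
    calc (t:ℝ)^t * ((m.choose t:ℝ) * p^t)
        ≤ (3^t * (t.factorial:ℝ)) * ((m.choose t:ℝ) * p^t) := by
          apply mul_le_mul_of_nonneg_right (pow_self_le t) (by positivity)
      _ = 3^t * (((m.choose t:ℝ) * t.factorial) * p^t) := by ring
      _ ≤ 3^t * ((m:ℝ)^t * p^t) := by
          apply mul_le_mul_of_nonneg_left _ (by positivity)
          exact mul_le_mul_of_nonneg_right hchoose (by positivity)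
      _ = 3^t * (m:ℝ)^t * p^t := by ring
  have h3 : (m.choose t : ℝ) * p ^ t ≤ (3 * (m:ℝ) * p / t)^t := by
    rw [div_pow, le_div_iff₀ (by positivity)]
    calc (m.choose t:ℝ) * p^t * (t:ℝ)^t = (t:ℝ)^t * ((m.choose t:ℝ) * p^t) := by ring
      _ ≤ 3^t * (m:ℝ)^t * p^t := h2
      _ = (3 * (m:ℝ) * p)^t := by rw [mul_pow, mul_pow]
  exact h3.trans (pow_le_pow_left₀ (by positivity) hdiv t)

lemma slots_card_le {n : ℕ} (S : Finset (Fin n ⊕ Fin n)) :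
    4 * (slots n S).card ≤ S.card ^ 2 := by
  classical
  set L : Finset (Fin n) := Finset.univ.filter (fun i => Sum.inl i ∈ S) with hL
  set R : Finset (Fin n) := Finset.univ.filter (fun j => Sum.inr j ∈ S) with hR
  have hslots : slots n S = L ×ˢ R := by
    ext e; simp [slots, hL, hR, Finset.mem_product]
  have hcard : (slots n S).card = L.card * R.card := by
    rw [hslots, Finset.card_product]
  have hLR : L.card + R.card ≤ S.card := by
    have : L.card + R.card = ((L.image Sum.inl) ∪ (R.image Sum.inr)).card := by
      rw [Finset.card_union_of_disjoint]
      · rw [Finset.card_image_of_injective _ Sum.inl_injective,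
          Finset.card_image_of_injective _ Sum.inr_injective]
      · simp [Finset.disjoint_left]
    rw [this]
    apply Finset.card_le_card
    intro x hx
    simp only [Finset.mem_union, Finset.mem_image] at hx
    rcases hx with ⟨i, hi, rfl⟩ | ⟨j, hj, rfl⟩
    · simpa [hL] using hi
    · simpa [hR] using hj
  calc 4 * (slots n S).card = 4 * (L.card * R.card) := by rw [hcard]
    _ ≤ (L.card + R.card)^2 := by nlinarith [sq_nonneg (L.card - R.card : ℤ)]
    _ ≤ S.card ^ 2 := Nat.pow_le_pow_left hLR 2

lemma sum_A_le {n : ℕ} {q : ℝ} (hq0 : 0 ≤ q) (A : Finset (Finset (Fin n ⊕ Fin n)))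
    (hA : ∀ S ∈ A, 1 ≤ S.card) :
    ∑ S ∈ A, q ^ S.card ≤ ∑ s ∈ Finset.Icc 1 (2*n), ((2*n : ℝ) * q)^s := by
  classical
  set B : Finset (Finset (Fin n ⊕ Fin n)) :=
    (Finset.Icc 1 (2*n)).biUnion (fun s => Finset.powersetCard s Finset.univ) with hB
  have hAB : A ⊆ B := by
    intro S hS
    rw [hB, Finset.mem_biUnion]
    refine ⟨S.card, ?_, ?_⟩
    · rw [Finset.mem_Icc]
      refine ⟨hA S hS, ?_⟩
      have := Finset.card_le_univ S
      simpa [Finset.card_univ, Fintype.card_sum, Fintype.card_fin, two_mul] using this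
    · rw [Finset.mem_powersetCard]
      exact ⟨Finset.subset_univ S, rfl⟩
  have h1 : ∑ S ∈ A, q ^ S.card ≤ ∑ S ∈ B, q ^ S.card := by
    apply Finset.sum_le_sum_of_subset_of_nonneg hAB
    intro S _ _; positivity
  have h2 : ∑ S ∈ B, q ^ S.card
      = ∑ s ∈ Finset.Icc 1 (2*n),
        ∑ S ∈ Finset.powersetCard s (Finset.univ : Finset (Fin n ⊕ Fin n)), q ^ S.card := by
    rw [hB]
    refine Finset.sum_biUnion ?_
    intro a _ b _ hab
    simp only [Finset.disjoint_left]
    intro S hSa hSb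
    rw [Finset.mem_powersetCard] at hSa hSb
    exact hab (hSa.2.symm.trans hSb.2)
  have h3 : ∀ s ∈ Finset.Icc 1 (2*n),
      ∑ S ∈ Finset.powersetCard s (Finset.univ : Finset (Fin n ⊕ Fin n)), q ^ S.card
        ≤ ((2*n : ℝ) * q)^s := by
    intro s _
    have : ∀ S ∈ Finset.powersetCard s (Finset.univ : Finset (Fin n ⊕ Fin n)),
        q ^ S.card = q ^ s := by
      intro S hS
      rw [(Finset.mem_powersetCard.1 hS).2]
    rw [Finset.sum_congr rfl this, Finset.sum_const, Finset.card_powersetCard,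
      nsmul_eq_mul]
    have hchoose : ((Finset.univ : Finset (Fin n ⊕ Fin n)).card.choose s : ℝ) ≤ (2*n : ℝ)^s := by
      have h4 : (Finset.univ : Finset (Fin n ⊕ Fin n)).card = 2*n := by
        simp [Finset.card_univ, Fintype.card_sum, Fintype.card_fin, two_mul]
      rw [h4]
      have : (2*n).choose s ≤ (2*n)^s :=
        le_trans (Nat.choose_le_descFactorial _ _) (Nat.descFactorial_le_pow _ _)
      exact_mod_cast this
    calc ((Finset.univ : Finset (Fin n ⊕ Fin n)).card.choose s : ℝ) * q ^ s
        ≤ (2*n : ℝ)^s * q^s := mul_le_mul_of_nonneg_right hchoose (by positivity)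
      _ = ((2*n : ℝ) * q)^s := (mul_pow _ _ _).symm
  exact h1.trans (h2.trans_le (Finset.sum_le_sum h3))

lemma measure_bad_le (n : ℕ) (hn : 1 ≤ n) {ε' p : ℝ} (hε : 0 < ε') (hp0 : 0 < p)
    (hp1 : p ≤ 1) :
    bipartiteMeasure n p {ω | ¬ Good n ε' (ε' * n * p) ω}
      ≤ ENNReal.ofReal (∑ s ∈ Finset.Icc 1 (2*n),
          ((2*n : ℝ) * (9/10 : ℝ) ^ ((ε' * n * p)/6 : ℝ))^s) := by
  classical
  set d : ℝ := ε' * n * p with hd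
  have hnpos : (0:ℝ) < n := by exact_mod_cast hn
  have hd_pos : 0 < d := by rw [hd]; positivity
  set t : Finset (Fin n ⊕ Fin n) → ℕ := fun S => ⌈(S.card : ℝ) * d / 6⌉₊ with ht
  set A : Finset (Finset (Fin n ⊕ Fin n)) :=
    Finset.univ.filter (fun S => 1 ≤ S.card ∧ (S.card:ℝ) ≤ ε' * n / 5) with hA
  have ht1 : ∀ S ∈ A, 1 ≤ t S := by
    intro S hS
    rw [hA, Finset.mem_filter] at hS
    rw [ht]
    rw [Nat.one_le_ceil_iff]
    have h1 : (1:ℝ) ≤ S.card := by exact_mod_cast hS.2.1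
    positivity
  -- inclusion
  have hsub : {ω : Fin n × Fin n → Bool | ¬ Good n ε' d ω}
      ⊆ ⋃ S ∈ A, ⋃ F ∈ (slots n S).powersetCard (t S), {ω | ∀ e ∈ F, ω e = true} := by
    intro ω hω
    simp only [Set.mem_setOf_eq, Good, not_forall, not_lt] at hω
    obtain ⟨S, hS1, hS5, hSge⟩ := hω
    have hSA : S ∈ A := by rw [hA, Finset.mem_filter]; exact ⟨Finset.mem_univ _, hS1, hS5⟩
    have htle : t S ≤ (present n ω S).card := by
      rw [ht]; exact Nat.ceil_le.2 hSge
    obtain ⟨F, hFsub, hFcard⟩ := Finset.exists_subset_card_eq htle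
    simp only [Set.mem_iUnion]
    refine ⟨S, hSA, F, ?_, ?_⟩
    · rw [Finset.mem_powersetCard]
      exact ⟨hFsub.trans (Finset.filter_subset _ _), hFcard⟩
    · intro e he
      have := hFsub he
      simp only [present, Finset.mem_filter] at this
      exact this.2
  -- measure chain
  calc bipartiteMeasure n p {ω | ¬ Good n ε' d ω}
      ≤ bipartiteMeasure n p
        (⋃ S ∈ A, ⋃ F ∈ (slots n S).powersetCard (t S), {ω | ∀ e ∈ F, ω e = true}) :=
        measure_mono hsub
    _ ≤ ∑ S ∈ A, bipartiteMeasure n p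
        (⋃ F ∈ (slots n S).powersetCard (t S), {ω | ∀ e ∈ F, ω e = true}) :=
        measure_biUnion_finset_le A _
    _ ≤ ∑ S ∈ A, ∑ F ∈ (slots n S).powersetCard (t S),
          bipartiteMeasure n p {ω | ∀ e ∈ F, ω e = true} :=
        Finset.sum_le_sum (fun S _ => measure_biUnion_finset_le _ _)
    _ ≤ ∑ S ∈ A, ENNReal.ofReal
          ((((9:ℝ)/10) ^ ((ε' * n * p)/6 : ℝ)) ^ S.card) := by
        apply Finset.sum_le_sum
        intro S hS
        have hS' : 1 ≤ S.card ∧ (S.card:ℝ) ≤ ε' * n / 5 := by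
          rw [hA, Finset.mem_filter] at hS; exact hS.2
        -- inner sum
        have hinner : ∑ F ∈ (slots n S).powersetCard (t S),
            bipartiteMeasure n p {ω | ∀ e ∈ F, ω e = true}
            = ((slots n S).card.choose (t S)) • (ENNReal.ofReal p) ^ (t S) := by
          rw [← Finset.card_powersetCard (t S) (slots n S), ← Finset.sum_const]
          apply Finset.sum_congr rfl
          intro F hF
          rw [cyl_measure hp0.le hp1, (Finset.mem_powersetCard.1 hF).2]
        rw [hinner]
        -- per-term bound
        have hterm : ((slots n S).card.choose (t S) : ℝ) * p ^ (t S)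
            ≤ ((9:ℝ)/10) ^ (t S) := by
          apply choose_mul_pow_le hp0.le (ht1 S hS) (by norm_num)
          -- 3 * m * p ≤ (9/10) * t S
          have hm : 4 * (slots n S).card ≤ S.card ^ 2 := slots_card_le S
          have hm' : (4:ℝ) * (slots n S).card ≤ (S.card:ℝ)^2 := by exact_mod_cast hm
          have htge : (S.card : ℝ) * d / 6 ≤ (t S : ℝ) := by rw [ht]; exact Nat.le_ceil _
          have hcard5 : (S.card:ℝ) ≤ ε' * n / 5 := hS'.2
          have hcard0 : (0:ℝ) ≤ S.card := by positivity
          -- 3*m*p ≤ (3/4) S²p ≤ (3/20) S ε n p = (9/10)(S d/6) ≤ (9/10) t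
          have k1 : 3 * ((slots n S).card : ℝ) * p ≤ (3/4) * (S.card:ℝ)^2 * p := by
            nlinarith
          have k2' : (3/4) * (S.card:ℝ) * p * (S.card:ℝ)
              ≤ (3/4) * (S.card:ℝ) * p * (ε' * n / 5) :=
            mul_le_mul_of_nonneg_left hcard5 (by positivity)
          have k2 : (3/4) * (S.card:ℝ)^2 * p ≤ (9/10) * ((S.card:ℝ) * d / 6) := by
            rw [hd]
            nlinarith [k2']
          have k3 : (9/10) * ((S.card:ℝ) * d / 6) ≤ (9/10) * (t S : ℝ) := by linarith
          linarith
        -- convert to ENNReal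
        have hq : ((9:ℝ)/10) ^ (t S) ≤ (((9:ℝ)/10) ^ ((ε' * n * p)/6 : ℝ)) ^ S.card := by
          have htge : (S.card : ℝ) * d / 6 ≤ (t S : ℝ) := by rw [ht]; exact Nat.le_ceil _
          have e1 : ((9:ℝ)/10) ^ (t S) = ((9:ℝ)/10) ^ ((t S : ℕ) : ℝ) := by
            rw [Real.rpow_natCast]
          have e2 : (((9:ℝ)/10) ^ ((ε' * n * p)/6 : ℝ)) ^ S.card
              = ((9:ℝ)/10) ^ ((S.card : ℝ) * d / 6) := by
            rw [← Real.rpow_natCast (((9:ℝ)/10) ^ ((ε' * n * p)/6 : ℝ)) S.card,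
              ← Real.rpow_mul (by norm_num)]
            rw [hd]
            ring_nf
          rw [e1, e2]
          exact Real.rpow_le_rpow_of_exponent_ge (by norm_num) (by norm_num) htge
        calc ((slots n S).card.choose (t S)) • (ENNReal.ofReal p) ^ (t S)
            = ENNReal.ofReal (((slots n S).card.choose (t S) : ℝ) * p ^ (t S)) := by
              rw [ENNReal.ofReal_mul (by positivity), ENNReal.ofReal_pow hp0.le,
                ENNReal.ofReal_natCast, nsmul_eq_mul]
          _ ≤ ENNReal.ofReal ((((9:ℝ)/10) ^ ((ε' * n * p)/6 : ℝ)) ^ S.card) :=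
              ENNReal.ofReal_le_ofReal (hterm.trans hq)
    _ ≤ ENNReal.ofReal (∑ s ∈ Finset.Icc 1 (2*n),
          ((2*n : ℝ) * (9/10 : ℝ) ^ ((ε' * n * p)/6 : ℝ))^s) := by
        rw [← ENNReal.ofReal_sum_of_nonneg (fun S _ => by positivity)]
        apply ENNReal.ofReal_le_ofReal
        apply sum_A_le (by positivity)
        intro S hS
        rw [hA, Finset.mem_filter] at hS
        exact hS.2.1

open Filter in
lemma sum_geom_le {M : ℕ} {r : ℝ} (h0 : 0 ≤ r) (h : r ≤ 1/2) :
    ∑ s ∈ Finset.Icc 1 M, r ^ s ≤ 2 * r := by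
  rw [← Finset.Ico_add_one_right_eq_Icc, Finset.sum_Ico_eq_sum_range]
  have e : ∀ i ∈ Finset.range (M + 1 - 1), r ^ (1 + i) = r * r ^ i := by
    intro i _; rw [pow_add, pow_one]
  rw [Finset.sum_congr rfl e, ← Finset.mul_sum]
  have h1 : ∑ i ∈ Finset.range (M + 1 - 1), r ^ i ≤ 2 := by
    calc ∑ i ∈ Finset.range (M + 1 - 1), r ^ i
        ≤ ∑ i ∈ Finset.range (M + 1 - 1), ((1:ℝ)/2) ^ i :=
          Finset.sum_le_sum (fun i _ => pow_le_pow_left₀ h0 h i)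
      _ ≤ 2 := sum_geometric_two_le _
  calc r * ∑ i ∈ Finset.range (M + 1 - 1), r ^ i ≤ r * 2 :=
        mul_le_mul_of_nonneg_left h1 h0
    _ = 2 * r := by ring

open Filter in
lemma r_tendsto (C ε' : ℝ) (hC : 0 < C) (hε : 0 < ε') :
    Tendsto (fun n : ℕ => (2 * n : ℝ) *
      ((9:ℝ)/10) ^ ((ε' * n * (C * (n:ℝ) ^ (-(2:ℝ)/3)))/6 : ℝ)) atTop (nhds 0) := by
  set c : ℝ := (ε' * C / 6) * (-Real.log ((9:ℝ)/10)) with hc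
  have hlog : Real.log ((9:ℝ)/10) < 0 := Real.log_neg (by norm_num) (by norm_num)
  have hcpos : 0 < c := by
    rw [hc]; apply mul_pos (by positivity); linarith
  have hg : Tendsto (fun x : ℝ => 2 * (x ^ (3:ℝ) * Real.exp (-c * x))) atTop (nhds 0) := by
    have := (tendsto_rpow_mul_exp_neg_mul_atTop_nhds_zero 3 c hcpos).const_mul 2
    simpa using this
  have hx : Tendsto (fun n : ℕ => (n:ℝ) ^ ((1:ℝ)/3)) atTop atTop :=
    (tendsto_rpow_atTop (by norm_num : 0 < (1:ℝ)/3)).comp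
      tendsto_natCast_atTop_atTop
  have hcomp := hg.comp hx
  apply hcomp.congr'
  filter_upwards [eventually_ge_atTop 1] with n hn
  have hn0 : (0:ℝ) < n := by exact_mod_cast hn
  have e1 : ((n:ℝ) ^ ((1:ℝ)/3)) ^ (3:ℝ) = (n:ℝ) := by
    rw [← Real.rpow_mul hn0.le]; norm_num
  have e2 : (n:ℝ) * (n:ℝ) ^ (-(2:ℝ)/3) = (n:ℝ) ^ ((1:ℝ)/3) := by
    nth_rewrite 1 [← Real.rpow_one (n:ℝ)]
    rw [← Real.rpow_add hn0]; norm_num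
  have e3 : Real.exp (-c * ((n:ℝ) ^ ((1:ℝ)/3)))
      = ((9:ℝ)/10) ^ ((ε' * n * (C * (n:ℝ) ^ (-(2:ℝ)/3)))/6 : ℝ) := by
    rw [Real.rpow_def_of_pos (by norm_num : (0:ℝ) < 9/10)]
    congr 1
    have : ε' * n * (C * (n:ℝ) ^ (-(2:ℝ)/3)) = ε' * C * ((n:ℝ) * (n:ℝ) ^ (-(2:ℝ)/3)) := by
      ring
    rw [this, e2, hc]
    ring
  simp only [Function.comp_apply]
  rw [e1, e3]
  ring

/-- If `p(n) = C n^{-2/3}` with `C > 0` and `ε' ∈ (0,1)`, then a.a.s. every subgraph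
`G'` of `G(n,n,p(n))` with minimum degree at least `ε' n p(n)` satisfies: for all
`X ⊆ V₀ ∪ V₁` with `|X| ≤ ε' n / 15`, one has `|N_{G'}(X) \ X| ≥ 2|X|`. -/
theorem expansion_of_min_degree_subgraphs
    (C : ℝ) (hC : 0 < C) (ε' : ℝ) (hε' : ε' ∈ Set.Ioo (0 : ℝ) 1) :
    Filter.Tendsto (fun n : ℕ =>
      bipartiteMeasure n (C * (n : ℝ) ^ (-(2 : ℝ) / 3))
        {ω | ∀ G' : SimpleGraph (Fin n ⊕ Fin n), G' ≤ bipartiteGraph n ω →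
          (∀ v : Fin n ⊕ Fin n,
            ε' * n * (C * (n : ℝ) ^ (-(2 : ℝ) / 3)) ≤ ((G'.neighborSet v).ncard : ℝ)) →
          ∀ X : Set (Fin n ⊕ Fin n), (X.ncard : ℝ) ≤ ε' * n / 15 →
            2 * X.ncard ≤ ((setNeighborSet G' X) \ X).ncard})
      Filter.atTop (nhds 1) := by
  classical
  obtain ⟨hε0, hε1⟩ := hε'
  set r : ℕ → ℝ := fun n => (2 * n : ℝ) *
      ((9:ℝ)/10) ^ ((ε' * n * (C * (n:ℝ) ^ (-(2:ℝ)/3)))/6 : ℝ) with hr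
  have hr0 : ∀ n, 0 ≤ r n := by
    intro n; rw [hr]; positivity
  have hrt : Filter.Tendsto r Filter.atTop (nhds 0) := r_tendsto C ε' hC hε0
  have hrt2 : Filter.Tendsto (fun n => 2 * r n) Filter.atTop (nhds 0) := by
    simpa using hrt.const_mul 2
  have hbndt : Filter.Tendsto (fun n => ENNReal.ofReal (2 * r n))
      Filter.atTop (nhds 0) := by
    have := ENNReal.tendsto_ofReal (a := 0) hrt2
    simpa using this
  have hg : Filter.Tendsto (fun n => 1 - ENNReal.ofReal (2 * r n))
      Filter.atTop (nhds 1) := by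
    have := ENNReal.Tendsto.sub (tendsto_const_nhds (x := (1 : ENNReal)))
      hbndt (Or.inl (by simp))
    simpa using this
  have hP1ev : ∀ᶠ n : ℕ in Filter.atTop, C * (n:ℝ) ^ (-(2:ℝ)/3) ≤ 1 := by
    have h1 : Filter.Tendsto (fun n : ℕ => C * (n:ℝ) ^ (-(2:ℝ)/3))
        Filter.atTop (nhds 0) := by
      have h2 : Filter.Tendsto (fun x : ℝ => x ^ (-((2:ℝ)/3))) Filter.atTop (nhds 0) :=
        tendsto_rpow_neg_atTop (by norm_num)
      have h3 := (h2.comp tendsto_natCast_atTop_atTop).const_mul C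
      simp only [mul_zero] at h3
      apply h3.congr
      intro n
      simp only [Function.comp_apply]
      norm_num
    filter_upwards [h1.eventually_lt_const (by norm_num : (0:ℝ) < 1)] with n hn
    exact hn.le
  have hrev : ∀ᶠ n : ℕ in Filter.atTop, r n ≤ 1/2 := by
    filter_upwards [hrt.eventually_lt_const (by norm_num : (0:ℝ) < 1/2)] with n hn
    exact hn.le
  apply tendsto_of_tendsto_of_tendsto_of_le_of_le' hg tendsto_const_nhds
  · filter_upwards [Filter.eventually_ge_atTop 1, hP1ev, hrev] with n hn1 hP1 hr2
    have hnpos : (0:ℝ) < n := by exact_mod_cast hn1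
    have hp0 : 0 < C * (n:ℝ) ^ (-(2:ℝ)/3) := by positivity
    have hbad := measure_bad_le n hn1 hε0 hp0 hP1
    have hsum : ∑ s ∈ Finset.Icc 1 (2*n),
        ((2*n : ℝ) * (9/10 : ℝ) ^ ((ε' * n * (C * (n:ℝ) ^ (-(2:ℝ)/3)))/6 : ℝ))^s
          ≤ 2 * r n := by
      rw [hr]
      exact sum_geom_le (by positivity) (by rw [hr] at hr2; exact hr2)
    have hbad2 : bipartiteMeasure n (C * (n:ℝ) ^ (-(2:ℝ)/3))
        {ω | ¬ Good n ε' (ε' * n * (C * (n:ℝ) ^ (-(2:ℝ)/3))) ω}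
          ≤ ENNReal.ofReal (2 * r n) :=
      hbad.trans (ENNReal.ofReal_le_ofReal hsum)
    have hsubset : {ω : Fin n × Fin n → Bool |
        ¬ Good n ε' (ε' * n * (C * (n:ℝ) ^ (-(2:ℝ)/3))) ω}ᶜ ⊆
        {ω | ∀ G' : SimpleGraph (Fin n ⊕ Fin n), G' ≤ bipartiteGraph n ω →
          (∀ v : Fin n ⊕ Fin n,
            ε' * n * (C * (n : ℝ) ^ (-(2 : ℝ) / 3)) ≤ ((G'.neighborSet v).ncard : ℝ)) →
          ∀ X : Set (Fin n ⊕ Fin n), (X.ncard : ℝ) ≤ ε' * n / 15 →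
            2 * X.ncard ≤ ((setNeighborSet G' X) \ X).ncard} := by
      intro ω hω
      rw [Set.mem_compl_iff, Set.mem_setOf_eq, not_not] at hω
      exact det hε0 hω
    calc 1 - ENNReal.ofReal (2 * r n)
        ≤ 1 - bipartiteMeasure n (C * (n:ℝ) ^ (-(2:ℝ)/3))
            {ω | ¬ Good n ε' (ε' * n * (C * (n:ℝ) ^ (-(2:ℝ)/3))) ω} :=
          tsub_le_tsub_left hbad2 1
      _ = bipartiteMeasure n (C * (n:ℝ) ^ (-(2:ℝ)/3))
            {ω | ¬ Good n ε' (ε' * n * (C * (n:ℝ) ^ (-(2:ℝ)/3))) ω}ᶜ :=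
          (prob_compl_eq_one_sub (allMeas _)).symm
      _ ≤ _ := measure_mono hsubset
  · exact Filter.Eventually.of_forall (fun n => prob_le_one)
end

section
/- Let ε ∈ (0,1), n a positive integer, p ∈ (0,1], and let G' be a bipartite graph with parts V₀, V₁ of size n each, maximum degree at most (1+ε)·n·p, and more than (1+ε)·n²·p/2 edges. Let B₀ be the set of vertices in V₀ whose degree in G' is at least (1+ε/2)·n·p/2. Then |B₀| ≥ ε·n/(2+3ε). -/
open Finset

/-- If a bipartite graph `G'` with parts of size `n`, maximum degree at most `(1+ε)np`
and more than `(1+ε)n²p/2` edges is given, then the set `B₀` of vertices of `V₀` with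
degree at least `(1+ε/2)np/2` satisfies `|B₀| ≥ ε n / (2+3ε)`. -/
theorem large_degree_part_size
    (ε : ℝ) (hε : ε ∈ Set.Ioo (0 : ℝ) 1) (n : ℕ) (hn : 0 < n)
    (p : ℝ) (hp0 : 0 < p) (hp1 : p ≤ 1)
    (G' : SimpleGraph (Fin n ⊕ Fin n)) [DecidableRel G'.Adj]
    (hbip : G' ≤ completeBipartiteGraph (Fin n) (Fin n))
    (hmax : ∀ v : Fin n ⊕ Fin n, (G'.degree v : ℝ) ≤ (1 + ε) * n * p)
    (he : (1 + ε) * n ^ 2 * p / 2 < (G'.edgeFinset.card : ℝ)) :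
    ε * n / (2 + 3 * ε) ≤
      ((univ.filter (fun v : Fin n =>
        (1 + ε / 2) * n * p / 2 ≤ (G'.degree (Sum.inl v) : ℝ))).card : ℝ) := by
  obtain ⟨hε0, hε1⟩ := hε
  have hnoLL : ∀ a b : Fin n, ¬ G'.Adj (Sum.inl a) (Sum.inl b) := by
    intro a b h
    have := hbip h
    simp [completeBipartiteGraph] at this
  -- degree of inl v equals number of w with Adj (inl v) (inr w)
  have hdeg : ∀ v : Fin n, G'.degree (Sum.inl v)
      = (univ.filter (fun w : Fin n => G'.Adj (Sum.inl v) (Sum.inr w))).card := by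
    intro v
    rw [← SimpleGraph.card_neighborFinset_eq_degree, SimpleGraph.neighborFinset_eq_filter]
    rw [Finset.card_filter, Finset.card_filter, Fintype.sum_sum_type]
    simp [hnoLL]
  -- sum of inl degrees equals number of edges
  have key : ∑ v : Fin n, G'.degree (Sum.inl v) = G'.edgeFinset.card := by
    have h1 : ∑ v : Fin n, G'.degree (Sum.inl v)
        = ((univ : Finset (Fin n × Fin n)).filter
            (fun q => G'.Adj (Sum.inl q.1) (Sum.inr q.2))).card := by
      rw [Finset.card_filter]
      rw [Fintype.sum_prod_type]
      simp only [hdeg, Finset.card_filter]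
    rw [h1]
    apply Finset.card_bij (fun q _ => s(Sum.inl q.1, Sum.inr q.2))
    · intro q hq
      simp only [mem_filter] at hq
      rw [SimpleGraph.mem_edgeFinset]
      exact hq.2
    · intro a ha b hb hab
      simp only [Sym2.eq, Sym2.rel_iff', Prod.mk.injEq, Sum.inl.injEq, Sum.inr.injEq,
        Prod.swap_prod_mk, reduceCtorEq, false_and, and_false, or_false] at hab
      exact Prod.ext hab.1 hab.2
    · intro e he'
      rw [SimpleGraph.mem_edgeFinset] at he'
      induction e with
      | h x y =>
        rw [SimpleGraph.mem_edgeSet] at he'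
        match x, y with
        | Sum.inl a, Sum.inl b => exact absurd he' (hnoLL a b)
        | Sum.inl a, Sum.inr b =>
          exact ⟨(a, b), by simp [he'], rfl⟩
        | Sum.inr a, Sum.inl b =>
          exact ⟨(b, a), by simp [he'.symm], Sym2.eq_swap⟩
        | Sum.inr a, Sum.inr b =>
          have := hbip he'
          simp [completeBipartiteGraph] at this
  -- now the counting argument
  set B := univ.filter (fun v : Fin n =>
      (1 + ε / 2) * n * p / 2 ≤ (G'.degree (Sum.inl v) : ℝ)) with hB
  have hcardBn : B.card ≤ n := by
    simpa using Finset.card_le_card (Finset.filter_subset _ (univ : Finset (Fin n)))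
  have hcardB : (B.card : ℝ) ≤ n := by exact_mod_cast hcardBn
  have hsum : (G'.edgeFinset.card : ℝ) = ∑ v : Fin n, (G'.degree (Sum.inl v) : ℝ) := by
    rw [← key]; push_cast; ring
  have hsplit : ∑ v : Fin n, (G'.degree (Sum.inl v) : ℝ)
      = ∑ v ∈ B, (G'.degree (Sum.inl v) : ℝ)
        + ∑ v ∈ univ \ B, (G'.degree (Sum.inl v) : ℝ) := by
    rw [add_comm]
    exact (Finset.sum_sdiff (Finset.filter_subset _ _)).symm
  have hb1 : ∑ v ∈ B, (G'.degree (Sum.inl v) : ℝ) ≤ B.card * ((1 + ε) * n * p) := by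
    calc ∑ v ∈ B, (G'.degree (Sum.inl v) : ℝ) ≤ ∑ _v ∈ B, ((1 + ε) * n * p) :=
          Finset.sum_le_sum (fun v _ => hmax (Sum.inl v))
    _ = B.card * ((1 + ε) * n * p) := by rw [Finset.sum_const, nsmul_eq_mul]
  have hb2 : ∑ v ∈ univ \ B, (G'.degree (Sum.inl v) : ℝ)
      ≤ (univ \ B).card * ((1 + ε / 2) * n * p / 2) := by
    calc ∑ v ∈ univ \ B, (G'.degree (Sum.inl v) : ℝ)
        ≤ ∑ _v ∈ univ \ B, ((1 + ε / 2) * n * p / 2) := by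
          apply Finset.sum_le_sum
          intro v hv
          simp only [hB, Finset.mem_sdiff, Finset.mem_filter, Finset.mem_univ, true_and] at hv
          exact le_of_not_ge hv
    _ = _ := by rw [Finset.sum_const, nsmul_eq_mul]
  have hcardsd : ((univ \ B).card : ℝ) = n - B.card := by
    rw [Finset.card_sdiff_of_subset (Finset.filter_subset _ _)]
    have h2 : B.card ≤ (univ : Finset (Fin n)).card := by simpa using hcardBn
    push_cast [Nat.cast_sub h2]
    simp
    exact Nat.cast_sub hcardBn
  have hineq : (1 + ε) * n ^ 2 * p / 2
      < B.card * ((1 + ε) * n * p) + (n - (B.card : ℝ)) * ((1 + ε / 2) * n * p / 2) := by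
    calc (1 + ε) * n ^ 2 * p / 2 < (G'.edgeFinset.card : ℝ) := he
    _ = _ := by rw [hsum, hsplit]
    _ ≤ _ := by
      apply add_le_add hb1
      rw [← hcardsd]; exact hb2
  have hnp : (0:ℝ) < n * p := by positivity
  rw [div_le_iff₀ (by linarith)]
  nlinarith [mul_pos (mul_pos (by exact_mod_cast hn : (0:ℝ) < n) hp0) hε0]
end
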